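/- Let γ ≥ 0 and let ℓ, m : ℝ → ℝ be three times continuously differentiable on an open interval containing [0, 1], with |ℓ‴(t)| ≤ γ and |m‴(t)| ≤ γ for all t ∈ [0, 1]. If ℓ(0) = m(0), ℓ′(0) = m′(0) and ℓ(1) = m(1), then |ℓ″(0) − m″(0)| ≤ (2/3) γ. -/

import Mathlib

open Set

/-- On `[0,1]` inside an open set `s` where `f` is `C³`, within-derivatives on `[0,1]`
agree with global derivatives. -/
lemma aux_within_eq (f : ℝ → ℝ) (s : Set ℝ) (hs : IsOpen s) (hsub : Set.Icc (0 : ℝ) 1 ⊆ s)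
    (hf : ContDiffOn ℝ 3 f s) (k : ℕ) (hk : (k : WithTop ℕ∞) ≤ 3) :
    ∀ x ∈ Set.Icc (0 : ℝ) 1, iteratedDerivWithin k f (Set.Icc (0 : ℝ) 1) x
      = iteratedDeriv k f x := by
  intro x hx
  have h1 : HasFTaylorSeriesUpToOn 3 f (ftaylorSeriesWithin ℝ f s) s :=
    hf.ftaylorSeriesWithin hs.uniqueDiffOn
  have h2 : HasFTaylorSeriesUpToOn 3 f (ftaylorSeriesWithin ℝ f s) (Set.Icc (0 : ℝ) 1) :=
    h1.mono hsub
  have h3 := h2.eq_iteratedFDerivWithin_of_uniqueDiffOn hk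
    (uniqueDiffOn_Icc zero_lt_one) hx
  have h4 : iteratedFDerivWithin ℝ k f s x = iteratedFDeriv ℝ k f x :=
    iteratedFDerivWithin_of_isOpen k hs (hsub hx)
  rw [iteratedDerivWithin_eq_iteratedFDerivWithin, iteratedDeriv_eq_iteratedFDeriv,
    ← h3]
  simp only [ftaylorSeriesWithin, h4]

lemma aux_taylor (γ : ℝ) (f : ℝ → ℝ) (s : Set ℝ) (hs : IsOpen s)
    (hsub : Set.Icc (0 : ℝ) 1 ⊆ s) (hf : ContDiffOn ℝ 3 f s)
    (hf3 : ∀ t ∈ Set.Icc (0 : ℝ) 1, |iteratedDeriv 3 f t| ≤ γ) :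
    ∃ A : ℝ, |A| ≤ γ ∧
      f 1 - (f 0 + deriv f 0 + (1 / 2) * iteratedDeriv 2 f 0) = A / 6 := by
  have hIcc : ContDiffOn ℝ 3 f (Set.Icc (0 : ℝ) 1) := hf.mono hsub
  have hcd2 : ContDiffOn ℝ 2 f (Set.Icc (0 : ℝ) 1) := hIcc.of_le (by norm_num)
  have hdiff : DifferentiableOn ℝ (iteratedDerivWithin 2 f (Set.Icc (0 : ℝ) 1))
      (Set.Ioo (0 : ℝ) 1) :=
    (hIcc.differentiableOn_iteratedDerivWithin (by norm_num)
      (uniqueDiffOn_Icc zero_lt_one)).mono Set.Ioo_subset_Icc_self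
  have hu : Set.uIcc (0 : ℝ) 1 = Set.Icc 0 1 := Set.uIcc_of_le zero_le_one
  have hu' : Set.uIoo (0 : ℝ) 1 = Set.Ioo 0 1 := Set.uIoo_of_le zero_le_one
  obtain ⟨x', hx', hT⟩ := taylor_mean_remainder_lagrange (n := 2) (x₀ := 0) (x := 1)
    zero_ne_one (hu ▸ hcd2) (hu ▸ hu' ▸ hdiff)
  rw [hu] at hT
  rw [hu'] at hx'
  refine ⟨iteratedDeriv 3 f x', hf3 x' (Set.Ioo_subset_Icc_self hx'), ?_⟩
  have hx'Icc : x' ∈ Set.Icc (0 : ℝ) 1 := Set.Ioo_subset_Icc_self hx'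
  have e3 := aux_within_eq f s hs hsub hf 3 (by norm_num) x' hx'Icc
  have h0m : (0 : ℝ) ∈ Set.Icc (0 : ℝ) 1 := by norm_num
  have e0 := aux_within_eq f s hs hsub hf 0 (by norm_num) 0 h0m
  have e1 := aux_within_eq f s hs hsub hf 1 (by norm_num) 0 h0m
  have e2 := aux_within_eq f s hs hsub hf 2 (by norm_num) 0 h0m
  rw [taylor_within_apply] at hT
  simp only [Finset.sum_range_succ, Finset.sum_range_zero, e0, e1, e2, e3, smul_eq_mul,
    iteratedDeriv_zero, iteratedDeriv_one] at hT
  norm_num [Nat.factorial] at hT ⊢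
  linarith [hT]

/-- **Taylor comparison of two thrice differentiable functions (core of Lemma 3.6 (i)).**
If `ℓ, m` are three times continuously differentiable on an open interval containing
`[0,1]`, with third derivatives bounded by `γ` on `[0,1]`, and they interpolate in value
at `0` and `1` and in first derivative at `0`, then their second derivatives at `0`
differ by at most `(2/3)γ`. -/
theorem stmt10 (γ : ℝ) (hγ : 0 ≤ γ) (ℓ m : ℝ → ℝ) (s : Set ℝ) (hs : IsOpen s)
    (hsub : Set.Icc (0 : ℝ) 1 ⊆ s)
    (hℓ : ContDiffOn ℝ 3 ℓ s) (hm : ContDiffOn ℝ 3 m s)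
    (hℓ3 : ∀ t ∈ Set.Icc (0 : ℝ) 1, |iteratedDeriv 3 ℓ t| ≤ γ)
    (hm3 : ∀ t ∈ Set.Icc (0 : ℝ) 1, |iteratedDeriv 3 m t| ≤ γ)
    (h0 : ℓ 0 = m 0) (h0' : deriv ℓ 0 = deriv m 0) (h1 : ℓ 1 = m 1) :
    |iteratedDeriv 2 ℓ 0 - iteratedDeriv 2 m 0| ≤ (2 / 3) * γ := by
  obtain ⟨A, hA, hAe⟩ := aux_taylor γ ℓ s hs hsub hℓ hℓ3
  obtain ⟨B, hB, hBe⟩ := aux_taylor γ m s hs hsub hm hm3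
  have key : iteratedDeriv 2 ℓ 0 - iteratedDeriv 2 m 0 = (B - A) / 3 := by
    linarith [hAe, hBe]
  have hBA : |B - A| ≤ 2 * γ := by
    calc |B - A| ≤ |B| + |A| := by simpa [sub_eq_add_neg] using abs_add_le B (-A)
    _ ≤ 2 * γ := by linarith
  have h3 : |(3 : ℝ)| = 3 := by norm_num
  rw [key, abs_div, h3]
  linarith
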